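/- arXiv:0908.4064 — 2 statements merged into one kernel-verified Lean document; each statement's English description precedes it below -/
import Mathlib

section
/- If M is an n×n Manin matrix, then the reversed-order relation A_m·M⁽ᵐ⁾·M⁽ᵐ⁻¹⁾⋯M⁽¹⁾ = A_m·M⁽ᵐ⁾⋯M⁽¹⁾·A_m also holds, obtained from the forward relation by conjugating with the longest permutation. -/
open Matrix

/-- `M` is a Manin matrix. -/
def IsManin {R : Type*} [Ring R] {n : ℕ} (M : Matrix (Fin n) (Fin n) R) : Prop :=
  (∀ i k j l : Fin n, i < k → j < l →
    M i j * M k l - M k l * M i j = M k j * M i l - M i l * M k j) ∧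
  (∀ i k j : Fin n, M i j * M k j = M k j * M i j)

/-- `M` acting in the `k`-th tensor leg of (ℂⁿ)^{⊗m} (identity elsewhere). -/
def leg {R : Type*} [Ring R] {n m : ℕ} (M : Matrix (Fin n) (Fin n) R) (k : Fin m) :
    Matrix (Fin m → Fin n) (Fin m → Fin n) R :=
  fun f g => if ∀ l, l ≠ k → f l = g l then M (f k) (g k) else 0

/-- Standard permutation representation of S_m on (ℂⁿ)^{⊗m}:
π(σ)(v₁⊗⋯⊗v_m) = v_{σ⁻¹(1)}⊗⋯⊗v_{σ⁻¹(m)}. -/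
def permMat (R : Type*) [Ring R] (n : ℕ) {m : ℕ} (σ : Equiv.Perm (Fin m)) :
    Matrix (Fin m → Fin n) (Fin m → Fin n) R :=
  fun f g => if f = g ∘ ⇑σ⁻¹ then 1 else 0

/-- The antisymmetrizer A_m = (1/m!) Σ_{σ ∈ S_m} sgn(σ) π(σ) on (ℂⁿ)^{⊗m}. -/
noncomputable def antisym (R : Type*) [Ring R] [Algebra ℚ R] (n m : ℕ) :
    Matrix (Fin m → Fin n) (Fin m → Fin n) R :=
  ((m.factorial : ℚ)⁻¹) •
    ∑ σ : Equiv.Perm (Fin m), ((Equiv.Perm.sign σ : ℤ) : ℚ) • permMat R n σ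

/-- The ordered product M⁽¹⁾·M⁽²⁾⋯M⁽ᵐ⁾ on (ℂⁿ)^{⊗m}. -/
def legProd {R : Type*} [Ring R] {n : ℕ} (M : Matrix (Fin n) (Fin n) R) (m : ℕ) :
    Matrix (Fin m → Fin n) (Fin m → Fin n) R :=
  (List.ofFn fun k : Fin m => leg M k).prod

/-- The reversed ordered product M⁽ᵐ⁾·M⁽ᵐ⁻¹⁾⋯M⁽¹⁾ on (ℂⁿ)^{⊗m}. -/
def legProdRev {R : Type*} [Ring R] {n : ℕ} (M : Matrix (Fin n) (Fin n) R) (m : ℕ) :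
    Matrix (Fin m → Fin n) (Fin m → Fin n) R :=
  (List.ofFn fun k : Fin m => leg M k).reverse.prod


section Lemmas

variable {R : Type*} [Ring R] {n m : ℕ}

lemma permMat_mul_apply (σ : Equiv.Perm (Fin m))
    (B : Matrix (Fin m → Fin n) (Fin m → Fin n) R) (f g : Fin m → Fin n) :
    (permMat R n σ * B) f g = B (f ∘ ⇑σ) g := by
  rw [Matrix.mul_apply, Finset.sum_eq_single (f ∘ ⇑σ)]
  · have : f = (f ∘ ⇑σ) ∘ ⇑σ⁻¹ := by
      funext l; simp
    rw [permMat, if_pos this, one_mul]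
  · intro h _ hne
    rw [permMat, if_neg, zero_mul]
    intro hc
    apply hne
    funext l
    rw [hc]; simp
  · intro h; exact absurd (Finset.mem_univ _) h

lemma mul_permMat_apply (σ : Equiv.Perm (Fin m))
    (B : Matrix (Fin m → Fin n) (Fin m → Fin n) R) (f g : Fin m → Fin n) :
    (B * permMat R n σ) f g = B f (g ∘ ⇑σ⁻¹) := by
  rw [Matrix.mul_apply, Finset.sum_eq_single (g ∘ ⇑σ⁻¹)]
  · rw [permMat, if_pos rfl, mul_one]
  · intro h _ hne
    rw [permMat, if_neg (by simpa using hne), mul_zero]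
  · intro h; exact absurd (Finset.mem_univ _) h

lemma permMat_one : permMat R n (1 : Equiv.Perm (Fin m)) = 1 := by
  ext f g
  simp [permMat, Matrix.one_apply, Function.comp]

lemma permMat_mul (σ τ : Equiv.Perm (Fin m)) :
    permMat R n σ * permMat R n τ = permMat R n (σ * τ) := by
  ext f g
  rw [permMat_mul_apply]
  simp only [permMat]
  congr 1
  apply propext
  constructor
  · intro h; funext l; have := congrFun h (σ⁻¹ l); simpa using this
  · intro h; funext l; have := congrFun h (σ l); simpa using this

lemma permMat_mul_leg (σ : Equiv.Perm (Fin m)) (M : Matrix (Fin n) (Fin n) R) (k : Fin m) :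
    permMat R n σ * leg M k = leg M (σ k) * permMat R n σ := by
  ext f g
  rw [permMat_mul_apply, mul_permMat_apply]
  simp only [leg, Function.comp_apply]
  by_cases h : ∀ l, l ≠ k → f (σ l) = g l
  · rw [if_pos h, if_pos, Equiv.Perm.inv_def, Equiv.symm_apply_apply]
    intro l hl
    have := h (σ⁻¹ l) (by intro hc; apply hl; rw [← hc]; exact (σ.apply_symm_apply l).symm)
    simpa using this
  · rw [if_neg h, if_neg]
    intro hc
    apply h
    intro l hl
    have := hc (σ l) (by simpa using hl)
    simpa using this

lemma commute_permMat_leg (σ : Equiv.Perm (Fin m)) (M : Matrix (Fin n) (Fin n) R) (k : Fin m)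
    (h : σ k = k) : Commute (permMat R n σ) (leg M k) := by
  unfold Commute SemiconjBy
  rw [permMat_mul_leg, h]

lemma leg_mul_leg (M : Matrix (Fin n) (Fin n) R) (k₀ k₁ : Fin m) (hne : k₁ ≠ k₀)
    (f g : Fin m → Fin n) :
    (leg M k₁ * leg M k₀) f g =
      if ∀ l, l ≠ k₀ → l ≠ k₁ → f l = g l
      then M (f k₁) (g k₁) * M (f k₀) (g k₀) else 0 := by
  rw [Matrix.mul_apply]
  split_ifs with hc
  · rw [Finset.sum_eq_single (Function.update f k₁ (g k₁))]
    · simp only [leg]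
      rw [if_pos, if_pos]
      · rw [Function.update_self, Function.update_of_ne hne.symm]
      · intro l hl
        by_cases hl1 : l = k₁
        · subst hl1; rw [Function.update_self]
        · rw [Function.update_of_ne hl1]; exact hc l hl hl1
      · intro l hl; rw [Function.update_of_ne hl]
    · intro h _ hne'
      simp only [leg]
      split_ifs with h1 h2
      · exact absurd (funext fun l => by
          by_cases hl : l = k₁
          · rw [hl, Function.update_self]; exact h2 k₁ hne
          · rw [Function.update_of_ne hl]; exact (h1 l hl).symm) hne'
      · exact mul_zero _
      · exact zero_mul _
      · exact zero_mul _
    · intro h; exact absurd (Finset.mem_univ _) h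
  · apply Finset.sum_eq_zero
    intro h _
    simp only [leg]
    split_ifs with h1 h2
    · exact absurd (fun l hl0 hl1 => (h1 l hl1).trans (h2 l hl0)) hc
    · exact mul_zero _
    · exact zero_mul _
    · exact zero_mul _

lemma manin4 {M : Matrix (Fin n) (Fin n) R} (hM : IsManin M) (a b c d : Fin n) :
    M a c * M b d + M a d * M b c = M b c * M a d + M b d * M a c := by
  obtain ⟨h1, h2⟩ := hM
  rcases lt_trichotomy a b with hab | rfl | hab
  · rcases lt_trichotomy c d with hcd | rfl | hcd
    · exact sub_eq_sub_iff_add_eq_add.mp (h1 a b c d hab hcd)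
    · rw [h2 a b c]
    · have := sub_eq_sub_iff_add_eq_add.mp (h1 a b d c hab hcd)
      rw [add_comm (M a c * M b d), add_comm (M b c * M a d)]
      exact this
  · rfl
  · rcases lt_trichotomy c d with hcd | rfl | hcd
    · exact (sub_eq_sub_iff_add_eq_add.mp (h1 b a c d hab hcd)).symm
    · rw [h2 a b c]
    · have := (sub_eq_sub_iff_add_eq_add.mp (h1 b a d c hab hcd)).symm
      rw [add_comm (M a c * M b d), add_comm (M b c * M a d)]
      exact this

lemma core {M : Matrix (Fin n) (Fin n) R} (hM : IsManin M) (k k' : Fin m) (hne : k' ≠ k) :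
    permMat R n (Equiv.swap k k') * (leg M k' * leg M k * (1 + permMat R n (Equiv.swap k k')))
      = leg M k' * leg M k * (1 + permMat R n (Equiv.swap k k')) := by
  set s := Equiv.swap k k' with hsdef
  ext f g
  rw [permMat_mul_apply]
  have expand : ∀ f' : Fin m → Fin n, (leg M k' * leg M k * (1 + permMat R n s)) f' g
      = (leg M k' * leg M k) f' g + (leg M k' * leg M k) f' (g ∘ ⇑s) := by
    intro f'
    rw [mul_add, mul_one, Matrix.add_apply, mul_permMat_apply]
    rw [hsdef, Equiv.swap_inv]
  rw [expand, expand]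
  rw [leg_mul_leg M k k' hne f g, leg_mul_leg M k k' hne f (g ∘ ⇑s),
    leg_mul_leg M k k' hne (f ∘ ⇑s) g, leg_mul_leg M k k' hne (f ∘ ⇑s) (g ∘ ⇑s)]
  have hs : ∀ (h : Fin m → Fin n) (l : Fin m), l ≠ k → l ≠ k' → (h ∘ ⇑s) l = h l := by
    intro h l h0 h1
    simp only [Function.comp_apply, hsdef, Equiv.swap_apply_of_ne_of_ne h0 h1]
  by_cases hC : ∀ l, l ≠ k → l ≠ k' → f l = g l
  · rw [if_pos hC, if_pos (fun l h0 h1 => (hC l h0 h1).trans (hs g l h0 h1).symm),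
      if_pos (fun l h0 h1 => (hs f l h0 h1).trans (hC l h0 h1)),
      if_pos (fun l h0 h1 => ((hs f l h0 h1).trans (hC l h0 h1)).trans (hs g l h0 h1).symm)]
    simp only [Function.comp_apply, hsdef, Equiv.swap_apply_left, Equiv.swap_apply_right]
    exact (manin4 hM (f k') (f k) (g k') (g k)).symm
  · have hC2 : ¬ ∀ l, l ≠ k → l ≠ k' → f l = (g ∘ ⇑s) l :=
      fun h => hC fun l h0 h1 => (h l h0 h1).trans (hs g l h0 h1)
    have hC3 : ¬ ∀ l, l ≠ k → l ≠ k' → (f ∘ ⇑s) l = g l :=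
      fun h => hC fun l h0 h1 => (hs f l h0 h1).symm.trans (h l h0 h1)
    have hC4 : ¬ ∀ l, l ≠ k → l ≠ k' → (f ∘ ⇑s) l = (g ∘ ⇑s) l :=
      fun h => hC fun l h0 h1 => ((hs f l h0 h1).symm.trans (h l h0 h1)).trans (hs g l h0 h1)
    rw [if_neg hC, if_neg hC2, if_neg hC3, if_neg hC4]

lemma antisym_mul_permMat [Algebra ℚ R] (τ : Equiv.Perm (Fin m)) :
    antisym R n m * permMat R n τ = ((Equiv.Perm.sign τ : ℤ) : ℚ) • antisym R n m := by
  unfold antisym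
  rw [smul_mul_assoc, Finset.sum_mul, smul_comm]
  congr 1
  have hb : (((Equiv.Perm.sign τ : ℤ) : ℚ)) * ((Equiv.Perm.sign τ : ℤ) : ℚ) = 1 := by
    rcases Int.units_eq_one_or (Equiv.Perm.sign τ) with h | h <;> rw [h] <;> norm_num
  have key : ∀ σ : Equiv.Perm (Fin m),
      (((Equiv.Perm.sign σ : ℤ) : ℚ) • permMat R n σ) * permMat R n τ
        = ((Equiv.Perm.sign τ : ℤ) : ℚ) •
            (((Equiv.Perm.sign (σ * τ) : ℤ) : ℚ) • permMat R n (σ * τ)) := by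
    intro σ
    rw [smul_mul_assoc, permMat_mul, smul_smul]
    congr 1
    rw [Equiv.Perm.sign_mul]
    push_cast
    rw [show (((Equiv.Perm.sign τ : ℤ) : ℚ)) * (((Equiv.Perm.sign σ : ℤ) : ℚ) *
      ((Equiv.Perm.sign τ : ℤ) : ℚ)) = ((Equiv.Perm.sign σ : ℤ) : ℚ) *
      ((((Equiv.Perm.sign τ : ℤ) : ℚ)) * ((Equiv.Perm.sign τ : ℤ) : ℚ)) from by ring, hb, mul_one]
  rw [Finset.sum_congr rfl (fun σ _ => key σ), ← Finset.smul_sum]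
  congr 1
  exact Equiv.sum_comp (Equiv.mulRight τ) (fun σ => ((Equiv.Perm.sign σ : ℤ) : ℚ) • permMat R n σ)

/-- auxiliary: the `i`-th leg as a function of a natural number. -/
def fleg {R : Type*} [Ring R] {n : ℕ} (M : Matrix (Fin n) (Fin n) R) (m : ℕ) (i : ℕ) :
    Matrix (Fin m → Fin n) (Fin m → Fin n) R :=
  if h : i < m then leg M ⟨i, h⟩ else 1

/-- auxiliary: partial reversed products fleg (j-1) * ⋯ * fleg t. -/
def Gp {R : Type*} [Ring R] {n : ℕ} (M : Matrix (Fin n) (Fin n) R) (m t j : ℕ) :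
    Matrix (Fin m → Fin n) (Fin m → Fin n) R :=
  ((List.range' t (j - t)).map (fleg M m)).reverse.prod

lemma Gp_self (M : Matrix (Fin n) (Fin n) R) (t : ℕ) : Gp M m t t = 1 := by
  simp [Gp]

lemma Gp_succ (M : Matrix (Fin n) (Fin n) R) {t j : ℕ} (h : t ≤ j) :
    Gp M m t (j + 1) = fleg M m j * Gp M m t j := by
  unfold Gp
  rw [show j + 1 - t = (j - t) + 1 from by omega, List.range'_concat,
    show t + 1 * (j - t) = j from by omega]
  simp

lemma Gp_mul (M : Matrix (Fin n) (Fin n) R) {s t j : ℕ} (hst : s ≤ t) (htj : t ≤ j) :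
    Gp M m t j * Gp M m s t = Gp M m s j := by
  induction j, htj using Nat.le_induction with
  | base => rw [Gp_self, one_mul]
  | succ j hj ih =>
      rw [Gp_succ M hj, mul_assoc, ih, Gp_succ M (hst.trans hj)]

lemma legProdRev_eq (M : Matrix (Fin n) (Fin n) R) : legProdRev M m = Gp M m 0 m := by
  unfold legProdRev Gp
  congr 2
  apply List.ext_getElem
  · simp
  · intro i h1 h2
    rw [List.length_ofFn] at h1
    simp [fleg, h1]

lemma commute_Gp (M : Matrix (Fin n) (Fin n) R) {t j : ℕ}
    (P : Matrix (Fin m → Fin n) (Fin m → Fin n) R)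
    (h : ∀ i, t ≤ i → i < j → Commute P (fleg M m i)) : Commute P (Gp M m t j) := by
  induction j with
  | zero =>
      have h0 : (0 : ℕ) - t = 0 := by omega
      unfold Gp
      rw [h0]
      simpa using Commute.one_right P
  | succ j ih =>
      by_cases htj : t ≤ j
      · rw [Gp_succ M htj]
        exact (h j htj (by omega)).mul_right (ih fun i hi hij => h i hi (by omega))
      · have h0 : j + 1 - t = 0 := by omega
        unfold Gp
        rw [h0]
        simpa using Commute.one_right P

lemma adj [Algebra ℚ R] {M : Matrix (Fin n) (Fin n) R} (hM : IsManin M)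
    (k k' : Fin m) (hkk' : (k' : ℕ) = (k : ℕ) + 1) :
    antisym R n m * legProdRev M m * permMat R n (Equiv.swap k k')
      = -(antisym R n m * legProdRev M m) := by
  set P := permMat R n (Equiv.swap k k') with hPdef
  set A := antisym R n m with hAdef
  have hne : k' ≠ k := by
    intro h
    rw [h] at hkk'
    omega
  have hAP : A * P = -A := by
    rw [hAdef, hPdef, antisym_mul_permMat, Equiv.Perm.sign_swap hne.symm]
    norm_num
  have hcomm : ∀ i : ℕ, i ≠ (k : ℕ) → i ≠ (k' : ℕ) → Commute P (fleg M m i) := by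
    intro i h0 h1
    unfold fleg
    split
    · rename_i hi
      apply commute_permMat_leg
      apply Equiv.swap_apply_of_ne_of_ne
      · intro hc; exact h0 (by rw [← hc])
      · intro hc; exact h1 (by rw [← hc])
    · exact Commute.one_right _
  have hk'm : (k : ℕ) + 1 < m := hkk' ▸ k'.isLt
  have hflegk : fleg M m (k : ℕ) = leg M k := by
    unfold fleg; rw [dif_pos k.isLt]
  have hflegk' : fleg M m ((k : ℕ) + 1) = leg M k' := by
    unfold fleg
    rw [dif_pos hk'm]
    have hk'eq : (⟨(k : ℕ) + 1, hk'm⟩ : Fin m) = k' := by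
      apply Fin.ext
      simp [hkk']
    rw [hk'eq]
  have hsplit : legProdRev M m
      = Gp M m ((k : ℕ) + 2) m * (leg M k' * leg M k * Gp M m 0 (k : ℕ)) := by
    rw [legProdRev_eq]
    have h2 : Gp M m 0 ((k : ℕ) + 2) = leg M k' * leg M k * Gp M m 0 (k : ℕ) := by
      rw [Gp_succ M (Nat.zero_le _), Gp_succ M (Nat.zero_le _), hflegk, hflegk', mul_assoc]
    rw [← h2]
    exact (Gp_mul M (Nat.zero_le _) (by omega)).symm
  have hPU : Commute P (Gp M m ((k : ℕ) + 2) m) :=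
    commute_Gp M P (fun i hi _ => hcomm i (by omega) (by omega))
  have hPW : Commute P (Gp M m 0 (k : ℕ)) :=
    commute_Gp M P (fun i _ hi => hcomm i (by omega) (by omega))
  have hZ := core hM k k' hne
  have key : A * legProdRev M m * (1 + P) = 0 := by
    have hWP : Gp M m 0 (k : ℕ) * (1 + P) = (1 + P) * Gp M m 0 (k : ℕ) := by
      rw [mul_add, add_mul, mul_one, one_mul, hPW.eq]
    have step1 : A * legProdRev M m * (1 + P)
        = A * Gp M m ((k : ℕ) + 2) m * (leg M k' * leg M k * (1 + P)) * Gp M m 0 (k : ℕ) := by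
      rw [hsplit]
      simp only [mul_assoc]
      rw [hWP]
    rw [step1]
    suffices h : A * Gp M m ((k : ℕ) + 2) m * (leg M k' * leg M k * (1 + P)) = 0 by
      rw [h, zero_mul]
    set T := A * Gp M m ((k : ℕ) + 2) m * (leg M k' * leg M k * (1 + P)) with hT
    have hTT : T = -T := by
      calc T = A * Gp M m ((k : ℕ) + 2) m * (P * (leg M k' * leg M k * (1 + P))) := by
              rw [hZ]
        _ = A * P * Gp M m ((k : ℕ) + 2) m * (leg M k' * leg M k * (1 + P)) := by
              rw [← mul_assoc, mul_assoc A, ← hPU.eq, ← mul_assoc A P]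
        _ = -T := by rw [hAP, hT]; simp [neg_mul]
    have h2 : T + T = 0 := by
      nth_rewrite 2 [hTT]
      simp
    have h3 : (2 : ℚ) • T = 0 := by rw [two_smul]; exact h2
    calc T = ((2 : ℚ)⁻¹) • ((2 : ℚ) • T) := by rw [smul_smul]; norm_num
      _ = 0 := by rw [h3, smul_zero]
  rw [mul_add, mul_one] at key
  exact eq_neg_of_add_eq_zero_right key

lemma claim [Algebra ℚ R] {M : Matrix (Fin n) (Fin n) R} (hM : IsManin M)
    (σ : Equiv.Perm (Fin m)) :
    antisym R n m * legProdRev M m * permMat R n σ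
      = ((Equiv.Perm.sign σ : ℤ) : ℚ) • (antisym R n m * legProdRev M m) := by
  induction m with
  | zero =>
      have : σ = 1 := Subsingleton.elim _ _
      subst this
      rw [permMat_one, mul_one, Equiv.Perm.sign_one]
      norm_num
  | succ m' _ =>
      have hσ : σ ∈ Submonoid.closure
          (Set.range fun i : Fin m' => Equiv.swap i.castSucc i.succ) := by
        rw [Equiv.Perm.mclosure_swap_castSucc_succ]
        trivial
      induction hσ using Submonoid.closure_induction with
      | mem τ hτ =>
          obtain ⟨i, rfl⟩ := hτ
          rw [adj hM i.castSucc i.succ (by simp)]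
          rw [Equiv.Perm.sign_swap (by simp [Fin.ext_iff])]
          norm_num
      | one =>
          rw [permMat_one, mul_one, Equiv.Perm.sign_one]
          norm_num
      | mul τ₁ τ₂ h₁ h₂ ih₁ ih₂ =>
          rw [← permMat_mul, ← mul_assoc, ih₁, smul_mul_assoc, ih₂, smul_smul,
            Equiv.Perm.sign_mul]
          push_cast
          ring_nf

lemma antisym_def [Algebra ℚ R] : antisym R n m = ((m.factorial : ℚ)⁻¹) •
    ∑ σ : Equiv.Perm (Fin m), ((Equiv.Perm.sign σ : ℤ) : ℚ) • permMat R n σ := rfl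

end Lemmas

/-- for a Manin matrix M, the reversed-order relation
A_m·M⁽ᵐ⁾⋯M⁽¹⁾ = A_m·M⁽ᵐ⁾⋯M⁽¹⁾·A_m holds for every m. -/
theorem antisym_legProdRev_of_manin {R : Type*} [Ring R] [Algebra ℚ R] {n : ℕ}
    (M : Matrix (Fin n) (Fin n) R) (hM : IsManin M) (m : ℕ) :
    antisym R n m * legProdRev M m = antisym R n m * legProdRev M m * antisym R n m := by
  have hsq : ∀ σ : Equiv.Perm (Fin m),
      (((Equiv.Perm.sign σ : ℤ) : ℚ)) * ((Equiv.Perm.sign σ : ℤ) : ℚ) = 1 := by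
    intro σ
    rcases Int.units_eq_one_or (Equiv.Perm.sign σ) with h | h <;> rw [h] <;> norm_num
  symm
  nth_rewrite 2 [antisym_def]
  rw [mul_smul_comm, Finset.mul_sum]
  have hterm : ∀ σ : Equiv.Perm (Fin m),
      antisym R n m * legProdRev M m * (((Equiv.Perm.sign σ : ℤ) : ℚ) • permMat R n σ)
        = antisym R n m * legProdRev M m := by
    intro σ
    rw [mul_smul_comm, claim hM σ, smul_smul, hsq, one_smul]
  rw [Finset.sum_congr rfl (fun σ _ => hterm σ), Finset.sum_const, Finset.card_univ,
    Fintype.card_perm, Fintype.card_fin, ← Nat.cast_smul_eq_nsmul ℚ, smul_smul,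
    inv_mul_cancel₀ (by exact_mod_cast m.factorial_ne_zero), one_smul]
end

section
/- For a Manin matrix M, the column determinant is independent of the order of columns in the following sense: for any permutation τ ∈ S_n, Σ_{σ∈S_n} sgn(σ) M_{σ(τ(1)),τ(1)} M_{σ(τ(2)),τ(2)} ⋯ M_{σ(τ(n)),τ(n)} = sgn(τ)·0 + det_col M, i.e. the column-ordered expansion along the column order τ(1),…,τ(n) equals the usual column determinant det_col M for every τ. -/
open Matrix

/-- The column determinant Σ_σ sgn(σ) M_{σ(1),1}⋯M_{σ(n),n}. -/
def cdet {R : Type*} [Ring R] {n : ℕ} (M : Matrix (Fin n) (Fin n) R) : R :=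
  ∑ σ : Equiv.Perm (Fin n),
    (Equiv.Perm.sign σ : ℤ) • (List.ofFn fun j => M (σ j) j).prod

lemma manin_rel {R : Type*} [Ring R] {n : ℕ} {M : Matrix (Fin n) (Fin n) R}
    (hM : IsManin M) (x y c d : Fin n) :
    M x c * M y d - M y d * M x c = M y c * M x d - M x d * M y c := by
  rcases lt_trichotomy c d with hcd | rfl | hcd
  · rcases lt_trichotomy x y with hxy | rfl | hxy
    · exact hM.1 x y c d hxy hcd
    · rfl
    · exact (hM.1 y x c d hxy hcd).symm
  · rw [hM.2 x y c]
  · rcases lt_trichotomy x y with hxy | rfl | hxy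
    · have h := hM.1 x y d c hxy hcd
      simpa only [neg_sub] using (congrArg Neg.neg h).symm
    · rfl
    · have h := hM.1 y x d c hxy hcd
      simpa only [neg_sub] using (congrArg Neg.neg h)

lemma ofFn_prod_split {R : Type*} [Ring R] {n : ℕ} {j l : Fin n} (h : (j : ℕ) + 1 = (l : ℕ))
    (f : Fin n → R) :
    (List.ofFn f).prod =
      ((List.ofFn f).take (j : ℕ)).prod *
        (f j * (f l * ((List.ofFn f).drop ((j : ℕ) + 2)).prod)) := by
  have hlen : (List.ofFn f).length = n := List.length_ofFn (f := f)
  have hl : ((l : ℕ)) < n := l.isLt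
  conv_lhs => rw [← List.take_append_drop (j : ℕ) (List.ofFn f)]
  rw [List.prod_append]
  congr 1
  have h1 : (List.ofFn f).drop (j : ℕ) = f j :: f l :: (List.ofFn f).drop ((j : ℕ) + 2) := by
    rw [List.drop_eq_getElem_cons (by omega)]
    congr 1
    · rw [List.getElem_ofFn]
    · rw [List.drop_eq_getElem_cons (by omega), List.getElem_ofFn]
      congr 2
      exact Fin.ext (by simpa using h)
  rw [h1, List.prod_cons, List.prod_cons]

lemma take_ofFn_congr {α : Type*} {n : ℕ} {f g : Fin n → α} (k : ℕ)
    (h : ∀ m : Fin n, (m : ℕ) < k → f m = g m) :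
    (List.ofFn f).take k = (List.ofFn g).take k := by
  apply List.ext_getElem (by simp)
  intro i h1 h2
  rw [List.length_take, List.length_ofFn] at h1
  simp only [List.getElem_take, List.getElem_ofFn]
  exact h ⟨i, by omega⟩ (show i < k by omega)

lemma drop_ofFn_congr {α : Type*} {n : ℕ} {f g : Fin n → α} (k : ℕ)
    (h : ∀ m : Fin n, k ≤ (m : ℕ) → f m = g m) :
    (List.ofFn f).drop k = (List.ofFn g).drop k := by
  apply List.ext_getElem (by simp)
  intro i h1 h2
  rw [List.length_drop, List.length_ofFn] at h1
  simp only [List.getElem_drop, List.getElem_ofFn]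
  exact h ⟨k + i, by omega⟩ (Nat.le_add_right k i)

lemma mid_factor {R : Type*} [Ring R] (T D a1 a2 b1 b2 c1 c2 d1 d2 : R)
    (h : a1 * a2 - b1 * b2 = c1 * c2 - d1 * d2) :
    T * (a1 * (a2 * D)) - T * (b1 * (b2 * D)) =
      T * (c1 * (c2 * D)) - T * (d1 * (d2 * D)) := by
  have e : ∀ x y : R, T * (x * (y * D)) = T * (x * y) * D := fun x y => by noncomm_ring
  rw [e, e, e, e, ← sub_mul, ← sub_mul, ← mul_sub, ← mul_sub, h]

open Equiv in
lemma prods_key {R : Type*} [Ring R] {m : ℕ} {M : Matrix (Fin (m+1)) (Fin (m+1)) R}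
    (hM : IsManin M) (ρ : Equiv.Perm (Fin (m+1))) (i : Fin m) (σ : Equiv.Perm (Fin (m+1))) :
    (List.ofFn fun m' => M (σ (ρ (Equiv.swap i.castSucc i.succ m')))
        (ρ (Equiv.swap i.castSucc i.succ m'))).prod
      - (List.ofFn fun m' => M (σ (ρ m')) (ρ m')).prod
      - ((List.ofFn fun m' =>
            M (σ (Equiv.swap (ρ i.castSucc) (ρ i.succ) (ρ (Equiv.swap i.castSucc i.succ m'))))
              (ρ (Equiv.swap i.castSucc i.succ m'))).prod
          - (List.ofFn fun m' =>
              M (σ (Equiv.swap (ρ i.castSucc) (ρ i.succ) (ρ m'))) (ρ m')).prod) = 0 := by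
  have hcs : ((i.castSucc : Fin (m+1)) : ℕ) + 1 = ((i.succ : Fin (m+1)) : ℕ) := by simp
  rw [ofFn_prod_split hcs, ofFn_prod_split hcs, ofFn_prod_split hcs, ofFn_prod_split hcs]
  have hne : ∀ m' : Fin (m+1), m' ≠ i.castSucc → m' ≠ i.succ →
      Equiv.swap i.castSucc i.succ m' = m' := fun m' h1 h2 =>
    Equiv.swap_apply_of_ne_of_ne h1 h2
  have htf : ∀ m' : Fin (m+1), m' ≠ i.castSucc → m' ≠ i.succ →
      Equiv.swap (ρ i.castSucc) (ρ i.succ) (ρ m') = ρ m' := fun m' h1 h2 =>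
    Equiv.swap_apply_of_ne_of_ne (fun hc => h1 (ρ.injective hc)) (fun hc => h2 (ρ.injective hc))
  have hlo : ∀ m' : Fin (m+1), (m' : ℕ) < (i.castSucc : ℕ) → m' ≠ i.castSucc ∧ m' ≠ i.succ := by
    intro m' hm
    constructor <;> (intro hc; subst hc; simp at hm)
  have hhi : ∀ m' : Fin (m+1), (i.castSucc : ℕ) + 2 ≤ (m' : ℕ) → m' ≠ i.castSucc ∧ m' ≠ i.succ := by
    intro m' hm
    constructor <;> (intro hc; subst hc; simp at hm)
  -- identify the takes
  have hT : ∀ (F G : Fin (m+1) → R),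
      (∀ m', m' ≠ i.castSucc → m' ≠ i.succ → F m' = G m') →
      (List.ofFn F).take (i.castSucc : ℕ) = (List.ofFn G).take (i.castSucc : ℕ) := by
    intro F G hFG
    exact take_ofFn_congr _ (fun m' hm => hFG m' (hlo m' hm).1 (hlo m' hm).2)
  have hD : ∀ (F G : Fin (m+1) → R),
      (∀ m', m' ≠ i.castSucc → m' ≠ i.succ → F m' = G m') →
      (List.ofFn F).drop ((i.castSucc : ℕ) + 2) = (List.ofFn G).drop ((i.castSucc : ℕ) + 2) := by
    intro F G hFG
    exact drop_ofFn_congr _ (fun m' hm => hFG m' (hhi m' hm).1 (hhi m' hm).2)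
  rw [hT (fun m' => M (σ (ρ (Equiv.swap i.castSucc i.succ m'))) (ρ (Equiv.swap i.castSucc i.succ m')))
        (fun m' => M (σ (ρ m')) (ρ m')) (fun m' h1 h2 => by simp only [hne m' h1 h2]),
      hT (fun m' => M (σ (Equiv.swap (ρ i.castSucc) (ρ i.succ) (ρ (Equiv.swap i.castSucc i.succ m'))))
            (ρ (Equiv.swap i.castSucc i.succ m')))
        (fun m' => M (σ (ρ m')) (ρ m')) (fun m' h1 h2 => by simp only [hne m' h1 h2, htf m' h1 h2]),
      hT (fun m' => M (σ (Equiv.swap (ρ i.castSucc) (ρ i.succ) (ρ m'))) (ρ m'))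
        (fun m' => M (σ (ρ m')) (ρ m')) (fun m' h1 h2 => by simp only [htf m' h1 h2]),
      hD (fun m' => M (σ (ρ (Equiv.swap i.castSucc i.succ m'))) (ρ (Equiv.swap i.castSucc i.succ m')))
        (fun m' => M (σ (ρ m')) (ρ m')) (fun m' h1 h2 => by simp only [hne m' h1 h2]),
      hD (fun m' => M (σ (Equiv.swap (ρ i.castSucc) (ρ i.succ) (ρ (Equiv.swap i.castSucc i.succ m'))))
            (ρ (Equiv.swap i.castSucc i.succ m')))
        (fun m' => M (σ (ρ m')) (ρ m')) (fun m' h1 h2 => by simp only [hne m' h1 h2, htf m' h1 h2]),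
      hD (fun m' => M (σ (Equiv.swap (ρ i.castSucc) (ρ i.succ) (ρ m'))) (ρ m'))
        (fun m' => M (σ (ρ m')) (ρ m')) (fun m' h1 h2 => by simp only [htf m' h1 h2])]
  simp only [Equiv.swap_apply_left, Equiv.swap_apply_right]
  rw [sub_eq_zero]
  exact mid_factor _ _ _ _ _ _ _ _ _ _
    (manin_rel hM (σ (ρ i.succ)) (σ (ρ i.castSucc)) (ρ i.succ) (ρ i.castSucc))

lemma smul_comb {R : Type*} [Ring R] (c : ℤ) (A B A' B' : R) (h : A - B - (A' - B') = 0) :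
    (c • A - c • B) + (-(c • A') - -(c • B')) = 0 := by
  calc (c • A - c • B) + (-(c • A') - -(c • B'))
      = c • (A - B - (A' - B')) := by module
    _ = 0 := by rw [h, smul_zero]

lemma keyF {R : Type*} [Ring R] {m : ℕ} {M : Matrix (Fin (m+1)) (Fin (m+1)) R}
    (hM : IsManin M) (ρ : Equiv.Perm (Fin (m+1))) (i : Fin m) :
    (∑ σ : Equiv.Perm (Fin (m+1)), (Equiv.Perm.sign σ : ℤ) •
        (List.ofFn fun k => M (σ ((ρ * Equiv.swap i.castSucc i.succ) k))
          ((ρ * Equiv.swap i.castSucc i.succ) k)).prod)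
      = ∑ σ : Equiv.Perm (Fin (m+1)), (Equiv.Perm.sign σ : ℤ) •
          (List.ofFn fun k => M (σ (ρ k)) (ρ k)).prod := by
  have hab : ρ i.castSucc ≠ ρ i.succ :=
    ρ.injective.ne (by simp [Fin.ext_iff])
  rw [← sub_eq_zero, ← Finset.sum_sub_distrib]
  refine Finset.sum_ninvolution (fun σ => σ * Equiv.swap (ρ i.castSucc) (ρ i.succ))
    ?_ ?_ (fun _ => Finset.mem_univ _) ?_
  · intro σ
    have hsgn : ((Equiv.Perm.sign (σ * Equiv.swap (ρ i.castSucc) (ρ i.succ))) : ℤ)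
        = -(Equiv.Perm.sign σ : ℤ) := by
      simp [Equiv.Perm.sign_swap hab]
    simp only [Equiv.Perm.mul_apply, hsgn, neg_smul]
    exact smul_comb _ _ _ _ _ (prods_key hM ρ i σ)
  · intro σ _ hc
    exact hab (Equiv.swap_eq_one_iff.mp (mul_left_cancel (hc.trans (mul_one σ).symm)))
  · intro σ
    simp only [mul_assoc, Equiv.swap_mul_self, mul_one]

/-- for a Manin matrix the column determinant does not depend on
the order of the columns: expanding along the column order τ(1),…,τ(n) gives
the usual column determinant, for every permutation τ. -/
theorem cdet_column_order_independent {R : Type*} [Ring R] {n : ℕ}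
    (M : Matrix (Fin n) (Fin n) R) (hM : IsManin M) (τ : Equiv.Perm (Fin n)) :
    (∑ σ : Equiv.Perm (Fin n),
        (Equiv.Perm.sign σ : ℤ) • (List.ofFn fun k => M (σ (τ k)) (τ k)).prod)
      = cdet M := by
  cases n with
  | zero => simp [cdet]
  | succ m =>
    have hgen : ∀ x ∈ Submonoid.closure
        (Set.range fun i : Fin m => Equiv.swap i.castSucc i.succ),
        ∀ ρ : Equiv.Perm (Fin (m+1)),
          (∑ σ : Equiv.Perm (Fin (m+1)), (Equiv.Perm.sign σ : ℤ) •
              (List.ofFn fun k => M (σ ((ρ * x) k)) ((ρ * x) k)).prod)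
            = ∑ σ : Equiv.Perm (Fin (m+1)), (Equiv.Perm.sign σ : ℤ) •
                (List.ofFn fun k => M (σ (ρ k)) (ρ k)).prod := by
      intro x hx
      induction hx using Submonoid.closure_induction with
      | mem x hx =>
        obtain ⟨i, rfl⟩ := hx
        exact fun ρ => keyF hM ρ i
      | one => intro ρ; rw [mul_one]
      | mul x y hx hy px py =>
        intro ρ
        rw [← mul_assoc]
        exact (py (ρ * x)).trans (px ρ)
    have hτ : τ ∈ Submonoid.closure
        (Set.range fun i : Fin m => Equiv.swap i.castSucc i.succ) := by
      rw [Equiv.Perm.mclosure_swap_castSucc_succ]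
      exact Submonoid.mem_top τ
    have h := hgen τ hτ 1
    simp only [one_mul, Equiv.Perm.one_apply] at h
    rw [h]
    rfl
end
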